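/- Let 𝑙, 𝑚 ∈ {i, j, k} be distinct imaginary units. A quaternion q = q₀ + q₁𝑚 + q₂𝑙 belongs to the quaternionic Mandelbrot set if and only if the complex number q₀ + i√(q₁² + q₂²) belongs to the classical Mandelbrot set. Hence the 3D slices H(1,i,j), H(1,i,k), H(1,j,k) are rotations of the classical Mandelbrot set around the real axis. -/

import Mathlib

open scoped Quaternion

private lemma aux_w (l m : ℍ[ℝ])
    (hl : l ∈ ({⟨0, 1, 0, 0⟩, ⟨0, 0, 1, 0⟩, ⟨0, 0, 0, 1⟩} : Set ℍ[ℝ]))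
    (hm : m ∈ ({⟨0, 1, 0, 0⟩, ⟨0, 0, 1, 0⟩, ⟨0, 0, 0, 1⟩} : Set ℍ[ℝ]))
    (hlm : l ≠ m) (q₁ q₂ : ℝ) :
    (q₁ • m + q₂ • l).re = 0 ∧
    (q₁ • m + q₂ • l) * (q₁ • m + q₂ • l) = -(((q₁^2 + q₂^2 : ℝ) : ℍ[ℝ])) := by
  rcases hl with hl|hl|hl <;> rcases hm with hm|hm|hm <;>
    first
      | exact absurd (hl.trans hm.symm) hlm
      | (obtain ⟨a1, a2, a3, a4⟩ := QuaternionAlgebra.ext_iff.mp hl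
         obtain ⟨b1, b2, b3, b4⟩ := QuaternionAlgebra.ext_iff.mp hm
         dsimp only at a1 a2 a3 a4 b1 b2 b3 b4
         refine ⟨by simp [a1, b1], ?_⟩
         ext <;> simp [Quaternion.re_mul, Quaternion.imI_mul, Quaternion.imJ_mul,
           Quaternion.imK_mul, a1, a2, a3, a4, b1, b2, b3, b4, ← Quaternion.coe_pow] <;> ring)

private lemma aux_sq (u : ℍ[ℝ]) (hre : u.re = 0) (huu : u * u = -1) (a b : ℝ) :
    ((a:ℍ[ℝ]) + b • u)^2 = ((a^2-b^2 : ℝ):ℍ[ℝ]) + (2*a*b) • u := by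
  have h1 : u.imI^2 + u.imJ^2 + u.imK^2 = 1 := by
    have := congrArg QuaternionAlgebra.re huu
    simp [Quaternion.re_mul, hre] at this
    nlinarith
  rw [pow_two]
  ext <;>
    simp [Quaternion.re_mul, Quaternion.imI_mul, Quaternion.imJ_mul, Quaternion.imK_mul, hre,
      ← Quaternion.coe_pow] <;>
    nlinarith [h1]

private lemma aux_norm (u : ℍ[ℝ]) (hre : u.re = 0) (huu : u * u = -1) (a b : ℝ) :
    ‖(a:ℍ[ℝ]) + b • u‖ = Real.sqrt (a^2 + b^2) := by
  have h1 : u.imI^2 + u.imJ^2 + u.imK^2 = 1 := by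
    have := congrArg QuaternionAlgebra.re huu
    simp [Quaternion.re_mul, hre] at this
    nlinarith
  rw [norm_eq_sqrt_real_inner, Quaternion.inner_self]
  congr 1
  simp [Quaternion.normSq_def', hre]
  nlinarith

private lemma main_aux (u : ℍ[ℝ]) (hre : u.re = 0) (huu : u * u = -1) (q₀ r : ℝ) :
    Bornology.IsBounded
        (Set.range fun n : ℕ =>
          (fun z : ℍ[ℝ] => z ^ 2 + ((q₀ : ℍ[ℝ]) + r • u))^[n] 0) ↔
      Bornology.IsBounded
        (Set.range fun n : ℕ =>
          (fun z : ℂ => z ^ 2 + ((q₀ : ℂ) + (r : ℝ) * Complex.I))^[n] 0) := by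
  set f : ℂ → ℍ[ℝ] := fun z => ((z.re : ℝ) : ℍ[ℝ]) + z.im • u with hf
  have hnorm : ∀ z : ℂ, ‖f z‖ = ‖z‖ := by
    intro z
    rw [hf]
    simp only
    rw [aux_norm u hre huu, Complex.norm_def, Complex.normSq_apply]
    ring_nf
  have hc : f ((q₀ : ℂ) + (r : ℝ) * Complex.I) = (q₀ : ℍ[ℝ]) + r • u := by
    simp [hf]
  have hstep : ∀ z : ℂ, f (z ^ 2 + ((q₀ : ℂ) + (r : ℝ) * Complex.I)) =
      (f z) ^ 2 + ((q₀ : ℍ[ℝ]) + r • u) := by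
    intro z
    have hsq : f (z ^ 2) = (f z) ^ 2 := by
      rw [hf]
      simp only
      rw [aux_sq u hre huu]
      simp [pow_two, Complex.mul_re, Complex.mul_im]
      module
    have hadd : f (z ^ 2 + ((q₀ : ℂ) + (r : ℝ) * Complex.I)) = f (z ^ 2) +
        f ((q₀ : ℂ) + (r : ℝ) * Complex.I) := by
      simp only [hf, Complex.add_re, Complex.add_im]
      push_cast
      module
    rw [hadd, hsq, hc]
  have hiter : ∀ n : ℕ,
      (fun z : ℍ[ℝ] => z ^ 2 + ((q₀ : ℍ[ℝ]) + r • u))^[n] 0 =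
        f ((fun z : ℂ => z ^ 2 + ((q₀ : ℂ) + (r : ℝ) * Complex.I))^[n] 0) := by
    intro n
    induction n with
    | zero => simp [hf]
    | succ n ih =>
        rw [Function.iterate_succ_apply', Function.iterate_succ_apply', ih, hstep]
  rw [isBounded_iff_forall_norm_le, isBounded_iff_forall_norm_le]
  constructor <;> rintro ⟨C, hC⟩ <;> refine ⟨C, ?_⟩ <;> rintro x ⟨n, rfl⟩ <;>
    simpa only [hiter, hnorm] using hC _ ⟨n, rfl⟩

theorem quaternionic_slices_are_rotations (l m : ℍ[ℝ])
    (hl : l ∈ ({⟨0, 1, 0, 0⟩, ⟨0, 0, 1, 0⟩, ⟨0, 0, 0, 1⟩} : Set ℍ[ℝ]))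
    (hm : m ∈ ({⟨0, 1, 0, 0⟩, ⟨0, 0, 1, 0⟩, ⟨0, 0, 0, 1⟩} : Set ℍ[ℝ]))
    (hlm : l ≠ m) (q₀ q₁ q₂ : ℝ) :
    Bornology.IsBounded
        (Set.range fun n : ℕ =>
          (fun z : ℍ[ℝ] => z ^ 2 + ((q₀ : ℍ[ℝ]) + q₁ • m + q₂ • l))^[n] 0) ↔
      Bornology.IsBounded
        (Set.range fun n : ℕ =>
          (fun z : ℂ => z ^ 2 +
            ((q₀ : ℂ) + (Real.sqrt (q₁ ^ 2 + q₂ ^ 2) : ℝ) * Complex.I))^[n] 0) := by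
  obtain ⟨hwre, hww⟩ := aux_w l m hl hm hlm q₁ q₂
  set r := Real.sqrt (q₁ ^ 2 + q₂ ^ 2) with hrdef
  have hr0 : (0:ℝ) ≤ q₁ ^ 2 + q₂ ^ 2 := by positivity
  have hr2 : r ^ 2 = q₁ ^ 2 + q₂ ^ 2 := Real.sq_sqrt hr0
  by_cases hr : r = 0
  · have h0 : q₁ ^ 2 + q₂ ^ 2 = 0 := by rw [← hr2, hr]; ring
    have h1 : q₁ = 0 := by nlinarith [sq_nonneg q₁, sq_nonneg q₂]
    have h2 : q₂ = 0 := by nlinarith [sq_nonneg q₁, sq_nonneg q₂]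
    obtain ⟨hmre, hmm⟩ := aux_w l m hl hm hlm 1 0
    have hmre' : m.re = 0 := by simpa using hmre
    have hmm' : m * m = -1 := by
      have := hmm
      simp at this
      simpa using this
    have hcq : (q₀ : ℍ[ℝ]) + q₁ • m + q₂ • l = (q₀ : ℍ[ℝ]) + r • m := by
      simp [h1, h2, hr]
    rw [hcq]
    exact main_aux m hmre' hmm' q₀ r
  · set w := q₁ • m + q₂ • l with hwdef
    set u := r⁻¹ • w with hudef
    have hure : u.re = 0 := by simp [hudef, hwre]
    have huu : u * u = -1 := by
      rw [hudef, smul_mul_smul_comm, hww, ← hr2, smul_neg, Quaternion.smul_coe]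
      have : r⁻¹ * r⁻¹ * r ^ 2 = 1 := by field_simp
      rw [this]
      simp
    have hru : r • u = w := by
      rw [hudef, smul_smul, mul_inv_cancel₀ hr, one_smul]
    have hcq : (q₀ : ℍ[ℝ]) + q₁ • m + q₂ • l = (q₀ : ℍ[ℝ]) + r • u := by
      rw [add_assoc, hru]
    rw [hcq]
    exact main_aux u hure huu q₀ r
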